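/- For every n ≥ 3, every k ≥ 3, every deterministic algorithm A, and every configuration C of k robots on the n-ring in which exactly two adjacent vertices are occupied, there exists a Round Robin scheduler (an activation order on the k robots repeated forever, together with adversarial direction choices) such that the execution of A from C never solves Gathering. -/

import Mathlib

/-!
Robots on an anonymous `n`-ring (the cycle on `ZMod n`).  A configuration of `k`
robots is a function `Fin k → ZMod n` (several robots may share a vertex: a
multiplicity).  Robots are anonymous, oblivious and disoriented: an algorithm
only sees the set of occupied vertices expressed as offsets in the robot's own
local frame, whose orientation (reflection) is chosen by the adversary at each
activation.  A sequential scheduler activates one robot per round.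
-/

namespace RobotRing

/-- A configuration of `k` robots on the `n`-ring: robot `i` sits on vertex `C i`. -/
abbrev Config (n k : ℕ) := Fin k → ZMod n

/-- The set of occupied vertices of a configuration. -/
def occ {n k : ℕ} (C : Config n k) : Set (ZMod n) := Set.range C

/-- A boolean orientation viewed as the ring element `±1`. -/
def sgn {n : ℕ} (e : Bool) : ZMod n := if e then 1 else -1

/-- The local view of a robot located at `p` whose local frame has orientation `e`:
the occupied vertices, expressed as offsets in the robot's local frame
(robots cannot detect multiplicities, and perceive positions only relative to
themselves, up to reflection). -/
def view {n k : ℕ} (C : Config n k) (p : ZMod n) (e : Bool) : Set (ZMod n) :=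
  {d : ZMod n | p + sgn e * d ∈ occ C}

/-- A deterministic algorithm: to every local view it assigns a move,
`0` = stay still (nil), `±1` = move to an adjacent vertex, in the local frame. -/
abbrev Algo (n : ℕ) := Set (ZMod n) → SignType

/-- One activation: robot `i` is activated, the adversary chooses the orientation
`e` of its local frame (robots are disoriented and chirality-free, so a
reflection-ambiguous move direction is resolved by the adversary), and the robot
moves instantaneously as the algorithm prescribes on its view. -/
def step {n k : ℕ} (A : Algo n) (C : Config n k) (i : Fin k) (e : Bool) : Config n k :=
  Function.update C i (C i + sgn e * (SignType.cast (A (view C (C i) e)) : ZMod n))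

/-- The execution of algorithm `A` from the initial configuration `C₀` under the
sequential scheduler `sched` (one robot per round) and the adversarial
orientation choices `env`. -/
def exec {n k : ℕ} (A : Algo n) (C₀ : Config n k) (sched : ℕ → Fin k) (env : ℕ → Bool) :
    ℕ → Config n k
  | 0 => C₀
  | t + 1 => step A (exec A C₀ sched env t) (sched t) (env t)

/-- Fairness of a sequential (SEQ) scheduler: every robot is activated infinitely often. -/
def Fair {k : ℕ} (sched : ℕ → Fin k) : Prop :=
  ∀ (i : Fin k) (t : ℕ), ∃ t' ≥ t, sched t' = i

/-- A Round Robin scheduler: the `k` robots are activated one per round in a fixed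
order which repeats forever (each robot is activated exactly once per epoch of
`k` consecutive rounds). -/
def IsRoundRobin {k : ℕ} (sched : ℕ → Fin k) : Prop :=
  ∃ π : Equiv.Perm (Fin k), ∀ (t : ℕ) (h : t % k < k), sched t = π ⟨t % k, h⟩

/-- The execution `E` solves Gathering: after finitely many rounds all robots
occupy one common vertex and no robot ever moves afterwards. -/
def Solves {n k : ℕ} (E : ℕ → Config n k) : Prop :=
  ∃ T : ℕ, ∀ t ≥ T, (∀ i j : Fin k, E t i = E t j) ∧ E (t + 1) = E t

/-- The ring distance between two vertices of the `n`-ring. -/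
def ringDist {n : ℕ} (a b : ZMod n) : ℕ := min (a - b).val (b - a).val

section Aux
variable {n k : ℕ}

lemma sgn_mul_sgn (e : Bool) : (sgn e : ZMod n) * sgn e = 1 := by
  cases e <;> simp [sgn]

lemma sgn_mul_cancel (e : Bool) (x : ZMod n) : sgn e * (sgn e * x) = x := by
  rw [← mul_assoc, sgn_mul_sgn, one_mul]

lemma view_pair (C : Config n k) (p w : ZMod n) (e : Bool) (h : occ C = {p, w}) :
    view C p e = {0, sgn e * (w - p)} := by
  ext x
  simp only [view, h, Set.mem_insert_iff, Set.mem_singleton_iff, Set.mem_setOf_eq]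
  constructor
  · rintro (h1 | h1)
    · left
      have h2 : sgn e * x = 0 := by linear_combination h1
      calc x = sgn e * (sgn e * x) := (sgn_mul_cancel e x).symm
        _ = 0 := by rw [h2, mul_zero]
    · right
      have h2 : sgn e * x = w - p := by linear_combination h1
      calc x = sgn e * (sgn e * x) := (sgn_mul_cancel e x).symm
        _ = sgn e * (w - p) := by rw [h2]
  · rintro (rfl | rfl)
    · left; simp
    · right; rw [sgn_mul_cancel]; ring

lemma occ_pair_exists {C : Config n k} {u v : ZMod n} (h : occ C = {u, v}) :
    (∃ i, C i = u) ∧ (∃ j, C j = v) := by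
  constructor
  · have : u ∈ occ C := by rw [h]; exact Set.mem_insert _ _
    exact this
  · have : v ∈ occ C := by rw [h]; exact Set.mem_insert_iff.mpr (Or.inr rfl)
    exact this

lemma freeze (A : Algo n) (C : Config n k) (sched : ℕ → Fin k) (ε : ZMod n → Bool)
    (hA : ∀ i : Fin k, A (view C (C i) (ε (C i))) = 0) :
    ∀ t, exec A C sched (fun t' => ε (C (sched t'))) t = C := by
  intro t
  induction t with
  | zero => rfl
  | succ t ih =>
    show step A (exec A C sched _ t) (sched t) _ = C
    rw [ih, step, hA (sched t)]
    simp

lemma never_gather (hk : 3 ≤ k) (A : Algo n) (C : Config n k)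
    (hsn : A {0, 1} = SignType.neg) (hsp : A {0, -1} = SignType.pos)
    (h0 : ∃ i j : Fin k, C i ≠ C j) (sched : ℕ → Fin k) (env : ℕ → Bool) :
    ∀ t, ∃ i j : Fin k, exec A C sched env t i ≠ exec A C sched env t j := by
  haveI : Nontrivial (Fin k) := Fin.nontrivial_iff_two_le.mpr (by omega)
  intro t
  induction t with
  | zero => exact h0
  | succ t ih =>
    by_contra hcon
    push_neg at hcon
    set Et := exec A C sched env t with hEt
    set i := sched t
    set e := env t
    have hstep : exec A C sched env (t + 1) = step A Et i e := rfl
    set v := exec A C sched env (t + 1) i with hv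
    have hall : ∀ x, exec A C sched env (t + 1) x = v := fun x => hcon x i
    have hoth : ∀ x, x ≠ i → Et x = v := by
      intro x hx
      have := hall x
      rw [hstep, step, Function.update_of_ne hx] at this
      exact this
    set p := Et i with hp
    have hpv : p ≠ v := by
      intro hcontra
      obtain ⟨a, b, hab⟩ := ih
      have ha : Et a = v := by
        rcases eq_or_ne a i with h | h
        · rw [h, ← hp]; exact hcontra
        · exact hoth a h
      have hb : Et b = v := by
        rcases eq_or_ne b i with h | h
        · rw [h, ← hp]; exact hcontra
        · exact hoth b h
      exact hab (ha.trans hb.symm)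
    have hocc : occ Et = {p, v} := by
      ext w
      constructor
      · rintro ⟨x, rfl⟩
        by_cases h : x = i
        · left; rw [h]
        · right; exact hoth x h
      · rintro (rfl | rfl)
        · exact ⟨i, rfl⟩
        · obtain ⟨x, hx⟩ := exists_ne i
          exact ⟨x, hoth x hx⟩
    have hview : view Et p e = {0, sgn e * (v - p)} := view_pair Et p v e hocc
    have heq : p + sgn e * (SignType.cast (A (view Et p e)) : ZMod n) = v := by
      have := hall i
      rw [hstep, step] at this
      rw [← this, Function.update_self]
    rw [hview] at heq
    have hc2 : sgn e * (SignType.cast (A {0, sgn e * (v - p)}) : ZMod n) = v - p := by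
      linear_combination heq
    have hcast : (SignType.cast (A {0, sgn e * (v - p)}) : ZMod n) = sgn e * (v - p) := by
      conv_rhs => rw [← hc2]
      rw [sgn_mul_cancel]
    rcases hA : A {0, sgn e * (v - p)} with _ | _ | _
    · rw [hA] at hc2
      simp only [SignType.cast, mul_zero] at hc2
      exact hpv (sub_eq_zero.mp hc2.symm).symm
    · rw [hA] at hcast
      simp only [SignType.cast] at hcast
      rw [← hcast] at hA
      exact SignType.noConfusion (hsp.symm.trans hA)
    · rw [hA] at hcast
      simp only [SignType.cast] at hcast
      rw [← hcast] at hA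
      exact SignType.noConfusion (hsn.symm.trans hA)

lemma bool_ne_iff' {x y : Bool} (h : x ≠ y) : x = !y := by
  cases x <;> cases y <;> simp_all

lemma one_ne_zero_zmod (hn : 3 ≤ n) : (1 : ZMod n) ≠ 0 := by
  intro h
  have h2 : ((1 : ℕ) : ZMod n) = 0 := by rw [Nat.cast_one]; exact h
  have h3 : n ∣ 1 := (CharP.cast_eq_zero_iff (ZMod n) n 1).mp h2
  have := Nat.le_of_dvd one_pos h3
  omega

lemma swap_case (hn : 3 ≤ n) (hk : 3 ≤ k) (A : Algo n) (C : Config n k) (u : ZMod n)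
    (hocc : occ C = {u, u + 1})
    (hflip : ∀ b : Bool, ∃ e : Bool,
      sgn e * (SignType.cast (A {0, sgn e * (if b then (-1 : ZMod n) else 1)}) : ZMod n)
        = (if b then (-1 : ZMod n) else 1)) :
    ∃ (sched : ℕ → Fin k) (env : ℕ → Bool),
      IsRoundRobin sched ∧ ¬ Solves (exec A C sched env) := by
  classical
  have hk0 : 0 < k := by omega
  have h1 : (1 : ZMod n) ≠ 0 := one_ne_zero_zmod hn
  have hu : u + 1 ≠ u := by
    intro h; exact h1 (by linear_combination h)
  set posn : Bool → ZMod n := fun b => if b then u + 1 else u with hposn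
  set f : Fin k → Bool := fun i => decide (C i = u + 1) with hf
  have hposninj : ∀ x y : Bool, x ≠ y → posn x ≠ posn y := by
    intro x y hxy
    cases x <;> cases y
    · exact absurd rfl hxy
    · intro h
      simp only [hposn, Bool.false_eq_true, if_false, if_true] at h
      exact hu h.symm
    · intro h
      simp only [hposn, Bool.false_eq_true, if_false, if_true] at h
      exact hu h
    · exact absurd rfl hxy
  have hmem : ∀ i : Fin k, C i = u ∨ C i = u + 1 := by
    intro i
    have : C i ∈ occ C := ⟨i, rfl⟩
    rw [hocc] at this
    exact this
  have hCpos : ∀ i, C i = posn (f i) := by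
    intro i
    rcases hmem i with h | h
    · have hfi : f i = false := by
        simp only [hf, decide_eq_false_iff_not]
        rw [h]
        exact fun hh => hu hh.symm
      rw [hfi, h]
      simp [hposn]
    · have hfi : f i = true := by simp [hf, h]
      rw [hfi, h]
      simp [hposn]
  -- pigeonhole: two robots with the same f-value
  obtain ⟨i1, i2, h12, hfi⟩ := Fintype.exists_ne_map_eq_of_card_lt f
    (by simp only [Fintype.card_bool, Fintype.card_fin]; omega)
  set e0 : Fin k := ⟨0, by omega⟩ with he0
  set eL : Fin k := ⟨k - 1, by omega⟩ with heL
  have hne0L : e0 ≠ eL := by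
    intro h
    rw [Fin.ext_iff] at h
    simp only [he0, heL] at h
    omega
  set σ := Equiv.swap e0 i1 with hσ
  set τ := Equiv.swap eL (σ.symm i2) with hτ
  set π := τ.trans σ with hπ
  have hπ0 : π e0 = i1 := by
    have h1' : e0 ≠ σ.symm i2 := by
      intro h
      have h2 : σ e0 = i2 := by rw [h, Equiv.apply_symm_apply]
      rw [hσ, Equiv.swap_apply_left] at h2
      exact h12 h2
    rw [hπ]
    simp only [Equiv.trans_apply]
    rw [hτ, Equiv.swap_apply_of_ne_of_ne hne0L h1', hσ, Equiv.swap_apply_left]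
  have hπL : π eL = i2 := by
    rw [hπ]
    simp only [Equiv.trans_apply]
    rw [hτ, Equiv.swap_apply_left, Equiv.apply_symm_apply]
  have hgE : f (π e0) = f (π eL) := by rw [hπ0, hπL]; exact hfi
  set sched : ℕ → Fin k := fun t => π ⟨t % k, Nat.mod_lt t hk0⟩ with hsched
  set cnt : Fin k → ℕ → ℕ :=
    fun i t => (Finset.range t).sum (fun t' => if sched t' = i then 1 else 0) with hcnt
  have hcnt0 : ∀ i, cnt i 0 = 0 := by intro i; simp [hcnt]
  have hcntS : ∀ i t, cnt i (t + 1) = cnt i t + (if sched t = i then 1 else 0) := by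
    intro i t
    simp only [hcnt]
    exact Finset.sum_range_succ _ t
  have hcntF : ∀ (t : ℕ) (r : Fin k),
      cnt (π r) t = t / k + (if (r : ℕ) < t % k then 1 else 0) := by
    intro t
    induction t with
    | zero => intro r; simp [hcnt0]
    | succ t ih =>
      intro r
      rw [hcntS, ih r]
      have hrk : (r : ℕ) < k := r.2
      have hmod : t % k < k := Nat.mod_lt t hk0
      have hiff : (if sched t = π r then 1 else 0) = (if t % k = (r : ℕ) then 1 else 0) := by
        have hsch : (sched t = π r) ↔ (t % k = (r : ℕ)) := by
          simp only [hsched]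
          constructor
          · intro h
            exact congrArg Fin.val (π.injective h)
          · intro h
            exact congrArg π (Fin.ext h)
        by_cases h : sched t = π r
        · rw [if_pos h, if_pos (hsch.mp h)]
        · rw [if_neg h, if_neg (fun hh => h (hsch.mpr hh))]
      rw [hiff]
      by_cases hm : t % k + 1 = k
      · have ht1 : t + 1 = k * (t / k + 1) := by
          have h' := Nat.div_add_mod t k
          rw [Nat.mul_add, Nat.mul_one]
          omega
        have hmod1 : (t + 1) % k = 0 := by rw [ht1]; exact Nat.mul_mod_right k _
        have hdiv1 : (t + 1) / k = t / k + 1 := by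
          rw [ht1]; exact Nat.mul_div_cancel_left _ hk0
        rw [hmod1, hdiv1]
        split_ifs <;> omega
      · have ht1 : t + 1 = k * (t / k) + (t % k + 1) := by
          have h' := Nat.div_add_mod t k
          omega
        have hmod1 : (t + 1) % k = t % k + 1 := by
          rw [ht1, Nat.mul_add_mod]
          exact Nat.mod_eq_of_lt (by omega)
        have hdiv1 : (t + 1) / k = t / k := by
          rw [ht1, Nat.mul_add_div hk0, Nat.div_eq_of_lt (show t % k + 1 < k by omega), add_zero]
        rw [hmod1, hdiv1]
        split_ifs <;> omega
  set par : ℕ → Bool := fun m => decide (m % 2 = 1) with hpar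
  have hparS : ∀ m, par (m + 1) = ! par m := by
    intro m
    rcases Nat.mod_two_eq_zero_or_one m with h | h <;>
      simp [hpar, Nat.add_mod, h]
  choose ε hε using hflip
  set env : ℕ → Bool :=
    fun t => ε (xor (f (π ⟨t % k, Nat.mod_lt t hk0⟩)) (par (t / k))) with henv
  have hfne : ∃ a b : Fin k, f a ≠ f b := by
    obtain ⟨⟨ia, hia⟩, ⟨ib, hib⟩⟩ := occ_pair_exists hocc
    refine ⟨ia, ib, ?_⟩
    have ha : f ia = false := by
      simp only [hf, decide_eq_false_iff_not]
      rw [hia]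
      exact fun hh => hu hh.symm
    have hb : f ib = true := by simp [hf, hib]
    rw [ha, hb]
    simp
  have hside : ∀ t, ∃ a b : Fin k,
      xor (f a) (par (cnt a t)) ≠ xor (f b) (par (cnt b t)) := by
    intro t
    by_cases h0 : t % k = 0
    · obtain ⟨a, b, hab⟩ := hfne
      refine ⟨a, b, ?_⟩
      have hca : cnt a t = t / k := by
        have h' := hcntF t (π.symm a)
        rw [Equiv.apply_symm_apply] at h'
        rw [h', h0]
        simp
      have hcb : cnt b t = t / k := by
        have h' := hcntF t (π.symm b)
        rw [Equiv.apply_symm_apply] at h'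
        rw [h', h0]
        simp
      rw [hca, hcb]
      intro hcon
      apply hab
      cases hp : par (t / k) <;> rw [hp] at hcon <;> simpa using hcon
    · refine ⟨π e0, π eL, ?_⟩
      rw [hgE]
      have h0' : 0 < t % k := Nat.pos_of_ne_zero h0
      have hca : cnt (π e0) t = t / k + 1 := by
        rw [hcntF t e0]
        have : ((e0 : ℕ)) = 0 := rfl
        rw [this, if_pos h0']
      have hcb : cnt (π eL) t = t / k := by
        rw [hcntF t eL]
        have hmod : t % k < k := Nat.mod_lt t hk0
        have : ¬ ((eL : ℕ) < t % k) := by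
          have : (eL : ℕ) = k - 1 := rfl
          omega
        rw [if_neg this, add_zero]
      rw [hca, hcb, hparS]
      cases f (π eL) <;> cases par (t / k) <;> simp
  have hmain : ∀ t, exec A C sched env t
      = fun i => posn (xor (f i) (par (cnt i t))) := by
    intro t
    induction t with
    | zero =>
      funext i
      show C i = _
      rw [hCpos i]
      congr 1
      rw [hcnt0]
      simp [hpar]
    | succ t ih =>
      show step A (exec A C sched env t) (sched t) (env t) = _
      rw [ih]
      set Et : Config n k := fun i => posn (xor (f i) (par (cnt i t))) with hEt
      set j := sched t with hj
      set b := xor (f j) (par (cnt j t)) with hb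
      have hcntj : cnt j t = t / k := by
        rw [hj, hsched, hcntF t ⟨t % k, Nat.mod_lt t hk0⟩]
        simp
      have henvt : env t = ε b := by
        rw [hb, hcntj]
      have hjb : Et j = posn b := by simp only [hEt, hb]
      obtain ⟨a1, a2, ha12⟩ := hside t
      have hnb : ∃ x, Et x = posn (!b) := by
        by_cases hh : xor (f a1) (par (cnt a1 t)) = b
        · refine ⟨a2, ?_⟩
          simp only [hEt]
          congr 1
          rw [← hh] at *
          exact bool_ne_iff' ha12.symm
        · refine ⟨a1, ?_⟩
          simp only [hEt]
          congr 1
          exact bool_ne_iff' hh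
      have hoccEt : occ Et = {posn b, posn (!b)} := by
        ext w
        constructor
        · rintro ⟨x, rfl⟩
          have hx : xor (f x) (par (cnt x t)) = b ∨ xor (f x) (par (cnt x t)) = !b := by
            cases hxx : xor (f x) (par (cnt x t)) <;> cases hbb : b <;> simp
          rcases hx with h | h
          · left; simp only [hEt]; rw [h]
          · right; simp only [hEt]; rw [h]; exact rfl
        · rintro (rfl | rfl)
          · exact ⟨j, hjb⟩
          · exact hnb
      have hview : view Et (posn b) (env t)
          = {0, sgn (env t) * (posn (!b) - posn b)} :=
        view_pair Et (posn b) (posn (!b)) (env t) hoccEt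
      have hdiff : posn (!b) - posn b = (if b then (-1 : ZMod n) else 1) := by
        cases b <;> simp [hposn] <;> ring
      have hmove : posn b + sgn (env t)
          * (SignType.cast (A (view Et (posn b) (env t))) : ZMod n) = posn (!b) := by
        rw [hview, hdiff, henvt, hε b]
        cases b <;> simp [hposn] <;> ring
      funext i
      rw [step]
      by_cases hij : i = j
      · rw [hij, Function.update_self, hjb, hmove]
        have hcj : cnt j (t + 1) = cnt j t + 1 := by
          rw [hcntS, if_pos hj.symm]
        rw [hcj, hparS]
        show posn (!b) = posn (xor (f j) (!par (cnt j t)))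
        congr 1
        rw [hb]
        cases f j <;> cases par (cnt j t) <;> simp
      · rw [Function.update_of_ne hij]
        have hcj : cnt i (t + 1) = cnt i t := by
          rw [hcntS, if_neg (fun hh => hij (by rw [← hh, hj])), add_zero]
        rw [hcj]
  refine ⟨sched, env, ⟨π, fun t h => rfl⟩, ?_⟩
  rintro ⟨T, hT⟩
  obtain ⟨a, b, hab⟩ := hside T
  have hTall := (hT T le_rfl).1 a b
  rw [hmain T] at hTall
  exact hposninj _ _ hab hTall

end Aux

/-- for every `n ≥ 3`, `k ≥ 3`, every deterministic algorithm `A`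
and every configuration `C` of `k` robots on the `n`-ring in which exactly two
adjacent vertices are occupied, there is a Round Robin scheduler (together with
adversarial direction choices) such that the execution of `A` from `C` never
solves Gathering. -/
theorem stmt2 (n k : ℕ) (hn : 3 ≤ n) (hk : 3 ≤ k) (A : Algo n)
    (C : Config n k) (hC : ∃ u : ZMod n, occ C = {u, u + 1}) :
    ∃ (sched : ℕ → Fin k) (env : ℕ → Bool),
      IsRoundRobin sched ∧ ¬ Solves (exec A C sched env) := by
  classical
  obtain ⟨u, hocc⟩ := hC
  have hk0 : 0 < k := by omega
  have h1 : (1 : ZMod n) ≠ 0 := one_ne_zero_zmod hn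
  have hu : u + 1 ≠ u := fun h => h1 (by linear_combination h)
  obtain ⟨⟨i0, hi0⟩, ⟨j0, hj0⟩⟩ := occ_pair_exists hocc
  have hne0 : ∃ i j : Fin k, C i ≠ C j :=
    ⟨i0, j0, by rw [hi0, hj0]; exact fun h => hu h.symm⟩
  have hmem : ∀ i : Fin k, C i = u ∨ C i = u + 1 := by
    intro i
    have : C i ∈ occ C := ⟨i, rfl⟩
    rw [hocc] at this
    exact this
  have hvu : ∀ e, view C u e = {0, sgn e * 1} := by
    intro e
    have h' := view_pair C u (u + 1) e hocc
    rw [h', add_sub_cancel_left]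
  have hvu1 : ∀ e, view C (u + 1) e = {0, sgn e * (-1)} := by
    intro e
    have hocc' : occ C = {u + 1, u} := by rw [hocc, Set.pair_comm]
    have h' := view_pair C (u + 1) u e hocc'
    rw [h']
    congr 2
    ring
  set sched0 : ℕ → Fin k := fun t => ⟨t % k, Nat.mod_lt t hk0⟩ with hsched0
  have hRR0 : IsRoundRobin sched0 := ⟨Equiv.refl _, fun t h => rfl⟩
  have notSolves_of_frozen :
      ∀ (sc : ℕ → Fin k) (en : ℕ → Bool),
        (∀ t, exec A C sc en t = C) → ¬ Solves (exec A C sc en) := by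
    rintro sc en hfr ⟨T, hT⟩
    have h' := (hT T le_rfl).1 i0 j0
    rw [hfr T, hi0, hj0] at h'
    exact hu h'.symm
  rcases hA1 : A {0, (1 : ZMod n)} with _ | _ | _
  · -- A {0,1} = 0 : freeze with views {0,1}
    set ε : ZMod n → Bool := fun p => decide (p = u) with hε
    have hA : ∀ i : Fin k, A (view C (C i) (ε (C i))) = 0 := by
      intro i
      rcases hmem i with h | h
      · rw [h]
        have : ε u = true := by simp [hε]
        rw [this, hvu true]
        simpa [sgn] using hA1
      · rw [h]
        have : ε (u + 1) = false := by simp [hε, hu]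
        rw [this, hvu1 false]
        have : sgn false * (-1 : ZMod n) = 1 := by simp [sgn]
        rw [this]
        exact hA1
    exact ⟨sched0, fun t => ε (C (sched0 t)), hRR0,
      notSolves_of_frozen _ _ (freeze A C sched0 ε hA)⟩
  · -- A {0,1} = neg
    rcases hA2 : A {0, (-1 : ZMod n)} with _ | _ | _
    · -- A {0,-1} = 0 : freeze with views {0,-1}
      set ε : ZMod n → Bool := fun p => !(decide (p = u)) with hε
      have hA : ∀ i : Fin k, A (view C (C i) (ε (C i))) = 0 := by
        intro i
        rcases hmem i with h | h
        · rw [h]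
          have : ε u = false := by simp [hε]
          rw [this, hvu false]
          have : sgn false * (1 : ZMod n) = -1 := by simp [sgn]
          rw [this]
          exact hA2
        · rw [h]
          have : ε (u + 1) = true := by simp [hε, hu]
          rw [this, hvu1 true]
          have : sgn true * (-1 : ZMod n) = -1 := by simp [sgn]
          rw [this]
          exact hA2
      exact ⟨sched0, fun t => ε (C (sched0 t)), hRR0,
        notSolves_of_frozen _ _ (freeze A C sched0 ε hA)⟩
    · -- A {0,1} = neg, A {0,-1} = neg : swap case
      apply swap_case hn hk A C u hocc
      intro b
      cases b
      · refine ⟨false, ?_⟩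
        have hset : sgn false * (if (false : Bool) then (-1 : ZMod n) else 1) = -1 := by
          simp [sgn]
        rw [hset, hA2]
        simp [sgn, SignType.cast]
      · refine ⟨true, ?_⟩
        have hset : sgn true * (if (true : Bool) then (-1 : ZMod n) else 1) = -1 := by
          simp [sgn]
        rw [hset, hA2]
        simp [sgn, SignType.cast]
    · -- A {0,1} = neg, A {0,-1} = pos : expanding case, never gathered
      refine ⟨sched0, fun _ => true, hRR0, ?_⟩
      rintro ⟨T, hT⟩
      obtain ⟨i, j, hij⟩ := never_gather hk A C hA1 hA2 hne0 sched0 (fun _ => true) T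
      exact hij ((hT T le_rfl).1 i j)
  · -- A {0,1} = pos : swap case
    apply swap_case hn hk A C u hocc
    intro b
    cases b
    · refine ⟨true, ?_⟩
      have hset : sgn true * (if (false : Bool) then (-1 : ZMod n) else 1) = 1 := by
        simp [sgn]
      rw [hset, hA1]
      simp [sgn, SignType.cast]
    · refine ⟨false, ?_⟩
      have hset : sgn false * (if (true : Bool) then (-1 : ZMod n) else 1) = 1 := by
        simp [sgn]
      rw [hset, hA1]
      simp [sgn, SignType.cast]

end RobotRing
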